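/- Assume the Gaussian linear model, condition (minvar), and assumption (A') with constants Δ_j and exceptional probability κ, and let λ > 0. Then with probability at least 1 − κ, for any subset G ⊆ {1,…,p} with β⁰_j = 0 for all j ∈ G (H_{0,G} holds): max_{j∈G} a_{n,p;j}(σ)|β̂_corr;j| ≤ max_{j∈G} ( a_{n,p;j}(σ)|Z_j| + Δ_j ) + ‖a_{n,p}b(λ)‖_∞, where Z_j = β̂_j − E[β̂_j] and (Z₁,…,Z_p) ~ N_p(0, n⁻¹σ²Ω(λ)). -/

import Mathlib

open MeasureTheory ProbabilityTheory Filter Matrix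

noncomputable section

namespace PaperRidge

/-- Euclidean (ℓ₂) norm of a vector in `ℝᵖ`. -/
def l2norm {p : ℕ} (v : Fin p → ℝ) : ℝ := Real.sqrt (∑ j, v j ^ 2)

/-- `Σ̂ = n⁻¹ Xᵀ X`. -/
def Sigmahat (n : ℕ) {p : ℕ} (X : Matrix (Fin n) (Fin p) ℝ) : Matrix (Fin p) (Fin p) ℝ :=
  ((n : ℝ))⁻¹ • (Xᵀ * X)

/-- `Ω(λ) = (Σ̂ + λ I)⁻¹ Σ̂ (Σ̂ + λ I)⁻¹`. -/
def OmegaM (n : ℕ) {p : ℕ} (X : Matrix (Fin n) (Fin p) ℝ) (lam : ℝ) :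
    Matrix (Fin p) (Fin p) ℝ :=
  (Sigmahat n X + lam • (1 : Matrix (Fin p) (Fin p) ℝ))⁻¹ * Sigmahat n X *
    (Sigmahat n X + lam • (1 : Matrix (Fin p) (Fin p) ℝ))⁻¹

/-- `Ω_min(λ) = min_j Ω(λ)_jj`. -/
def OmegaMin (n : ℕ) {p : ℕ} (X : Matrix (Fin n) (Fin p) ℝ) (lam : ℝ) : ℝ :=
  ⨅ j : Fin p, OmegaM n X lam j j

/-- The Ridge estimator `β̂(λ) = (Σ̂ + λ I)⁻¹ n⁻¹ Xᵀ Y`. -/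
def ridge (n : ℕ) {p : ℕ} (X : Matrix (Fin n) (Fin p) ℝ) (lam : ℝ) (Y : Fin n → ℝ) :
    Fin p → ℝ :=
  ((Sigmahat n X + lam • (1 : Matrix (Fin p) (Fin p) ℝ))⁻¹ *
    (((n : ℝ))⁻¹ • Xᵀ)).mulVec Y

/-- The row space `R(X) ⊆ ℝᵖ` of the design matrix `X`. -/
def rowSpace (n : ℕ) {p : ℕ} (X : Matrix (Fin n) (Fin p) ℝ) : Submodule ℝ (Fin p → ℝ) :=
  Submodule.span ℝ (Set.range fun i => X i)

/-- `P` is the matrix of the orthogonal projection of `ℝᵖ` onto the row space of `X`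
(w.r.t. the standard inner product), i.e. `P = Xᵀ (X Xᵀ)⁻ X`. -/
def IsRowProjection (n : ℕ) {p : ℕ} (X : Matrix (Fin n) (Fin p) ℝ)
    (P : Matrix (Fin p) (Fin p) ℝ) : Prop :=
  Pᵀ = P ∧ P * P = P ∧ (∀ v, P.mulVec v ∈ rowSpace n X) ∧
    ∀ v ∈ rowSpace n X, P.mulVec v = v

/-- `t = λ_min≠0(A)`, the smallest nonzero eigenvalue of `A`. -/
def IsSmallestNonzeroEigenvalue {p : ℕ} (A : Matrix (Fin p) (Fin p) ℝ) (t : ℝ) : Prop :=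
  t ≠ 0 ∧ (∃ v, v ≠ 0 ∧ A.mulVec v = t • v) ∧
    ∀ s : ℝ, s ≠ 0 → (∃ v, v ≠ 0 ∧ A.mulVec v = s • v) → t ≤ s

/-- The random vector `Z : Ω → ℝᵖ` has the multivariate Gaussian distribution
`N_p(mv, C)` under `μ` (characterized through all one-dimensional projections). -/
def IsGaussianVec {Ω : Type*} [MeasurableSpace Ω] (μ : Measure Ω) {p : ℕ}
    (Z : Ω → Fin p → ℝ) (mv : Fin p → ℝ) (C : Matrix (Fin p) (Fin p) ℝ) : Prop :=
  ∀ u : Fin p → ℝ,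
    Measure.map (fun ω => ∑ j, u j * Z ω j) μ =
      gaussianReal (∑ j, u j * mv j)
        (Real.toNNReal (∑ j, ∑ k, u j * C j k * u k))

/-- The normalizing factors `a_{n,p;j}(σ) = n^{1/2} σ⁻¹ Ω(λ)_jj^{-1/2}`. -/
def anp (n : ℕ) {p : ℕ} (X : Matrix (Fin n) (Fin p) ℝ) (lam σ : ℝ) (j : Fin p) : ℝ :=
  Real.sqrt (n : ℝ) * σ⁻¹ * (Real.sqrt (OmegaM n X lam j j))⁻¹

/-- The bias-corrected Ridge estimator
`β̂_corr;j = β̂_j - ∑_{k ≠ j} (P_X)_{jk} β̂_init;k`. -/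
def corrRidge (n : ℕ) {p : ℕ} (X : Matrix (Fin n) (Fin p) ℝ) (lam : ℝ)
    (P : Matrix (Fin p) (Fin p) ℝ) (Y : Fin n → ℝ) (binit : Fin p → ℝ) (j : Fin p) : ℝ :=
  ridge n X lam Y j - ∑ k ∈ Finset.univ.erase j, P j k * binit k

/-- The standard normal cumulative distribution function `Φ`. -/
def Phi (x : ℝ) : ℝ := ((gaussianReal 0 1) (Set.Iic x)).toReal

/-- The p-value `P_j = 2 (1 - Φ((a_j |β̂_corr;j| - Δ_j)₊))`. -/
def pvalOf (aj Δj bc : ℝ) : ℝ := 2 * (1 - Phi (max (aj * |bc| - Δj) 0))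

/-- `max_{k ≠ j} f k`. -/
def maxOff {p : ℕ} (f : Fin p → ℝ) (j : Fin p) : ℝ :=
  ⨆ k : {k : Fin p // k ≠ j}, f k

/-- The distribution function `F_Z(c) = P[min_j 2 (1 - Φ(a_j |Z_j|)) ≤ c]`. -/
def FZdist {Ω' : Type*} [MeasurableSpace Ω'] (ν : Measure Ω') {p : ℕ}
    (a : Fin p → ℝ) (Z : Ω' → Fin p → ℝ) (c : ℝ) : ℝ :=
  (ν {ω' | (⨅ j, 2 * (1 - Phi (a j * |Z ω' j|))) ≤ c}).toReal

/-- A generalized inverse `F_Z^{-1}(α)`. -/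
def FZinv {Ω' : Type*} [MeasurableSpace Ω'] (ν : Measure Ω') {p : ℕ}
    (a : Fin p → ℝ) (Z : Ω' → Fin p → ℝ) (α : ℝ) : ℝ :=
  sInf {c : ℝ | α ≤ FZdist ν a Z c}

/-- `J_G(c) = P[max_{j ∈ G} (a_j |Z_j| + Δ_j) ≤ c]`. -/
def JG {Ω' : Type*} [MeasurableSpace Ω'] (ν : Measure Ω') {p : ℕ}
    (a Δ : Fin p → ℝ) (Z : Ω' → Fin p → ℝ) (G : Finset (Fin p)) (hG : G.Nonempty)
    (c : ℝ) : ℝ :=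
  (ν {ω' | G.sup' hG (fun j => a j * |Z ω' j| + Δ j) ≤ c}).toReal

section Aux
open Real

lemma integrable_id_gaussianReal (m : ℝ) (v : NNReal) : Integrable id (gaussianReal m v) := by
  rcases eq_or_ne v 0 with hv | hv
  · rw [hv, gaussianReal_zero_var]
    refine ⟨measurable_id.aestronglyMeasurable, ?_⟩
    rw [HasFiniteIntegral, lintegral_dirac' _ (by fun_prop)]
    exact ENNReal.coe_lt_top
  · rw [gaussianReal_of_var_ne_zero _ hv,
      integrable_withDensity_iff (measurable_gaussianPDF m v)
        (Filter.Eventually.of_forall fun x => ENNReal.ofReal_lt_top)]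
    have hvpos : (0:ℝ) < (v:ℝ) := by positivity
    have hb : (0:ℝ) < (2*(v:ℝ))⁻¹ := by positivity
    have key : Integrable (fun y : ℝ => (y + m) * gaussianPDFReal m v (y + m)) := by
      have h1 := (integrable_mul_exp_neg_mul_sq hb).const_mul (√(2 * π * v))⁻¹
      have h2 := (integrable_exp_neg_mul_sq hb).const_mul ((√(2 * π * v))⁻¹ * m)
      refine (h1.add h2).congr (Filter.Eventually.of_forall fun y => ?_)
      simp only [gaussianPDFReal, add_sub_cancel_right]
      have : -(y^2) / (2*(v:ℝ)) = -((2*(v:ℝ))⁻¹) * y^2 := by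
        field_simp
      rw [this]
      simp only [Pi.add_apply]
      ring
    refine (key.comp_sub_right m).congr (Filter.Eventually.of_forall fun x => ?_)
    simp only [sub_add_cancel, id, gaussianPDF]
    rw [ENNReal.toReal_ofReal (gaussianPDFReal_nonneg _ _ _)]

lemma integral_id_gaussianReal_zero (v : NNReal) : ∫ x, x ∂(gaussianReal 0 v) = 0 := by
  have hmap : (gaussianReal 0 v).map (fun x => (-1:ℝ) * x) = gaussianReal 0 v := by
    rw [show (fun x => (-1:ℝ)*x) = ((-1:ℝ) * ·) from rfl, gaussianReal_map_const_mul]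
    norm_num
  have h1 : ∫ x, -x ∂(gaussianReal 0 v) = ∫ x, x ∂(gaussianReal 0 v) := by
    have := (integral_map (φ := fun x => (-1:ℝ)*x) (f := fun x : ℝ => x) (μ := gaussianReal 0 v)
      (by fun_prop) measurable_id.aestronglyMeasurable)
    rw [hmap] at this
    simpa using this.symm
  have h2 : ∫ x, -x ∂(gaussianReal 0 v) = -∫ x, x ∂(gaussianReal 0 v) :=
    integral_neg _
  linarith

end Aux
theorem finite_sample_null_bound_group
    {Ω : Type*} [MeasurableSpace Ω] (μ : Measure Ω)
    (hμ : IsProbabilityMeasure μ)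
    (n p : ℕ) (hn : 0 < n) (hp : 0 < p)
    (X : Matrix (Fin n) (Fin p) ℝ) (β0 : Fin p → ℝ)
    (σ : ℝ) (hσ : 0 < σ)
    (ε : Ω → Fin n → ℝ) (hεm : ∀ i, Measurable fun ω => ε ω i)
    (hε : IsGaussianVec μ ε 0 (σ ^ 2 • (1 : Matrix (Fin n) (Fin n) ℝ)))
    (lam : ℝ) (hlam : 0 < lam)
    (PX : Matrix (Fin p) (Fin p) ℝ) (hPX : IsRowProjection n X PX)
    (lmin : ℝ) (hlmin : IsSmallestNonzeroEigenvalue (Sigmahat n X) lmin)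
    (hminvar : 0 < OmegaMin n X lam)
    (binit : Ω → Fin p → ℝ) (hbm : ∀ j, Measurable fun ω => binit ω j)
    (Δ : Fin p → ℝ) (hΔ : ∀ j, 0 < Δ j) (κ : ℝ) (hκ0 : 0 < κ) (hκ1 : κ < 1)
    (hA' : 1 - ENNReal.ofReal κ ≤
      μ {ω | ∀ j, |anp n X lam σ j *
        ∑ k ∈ Finset.univ.erase j, PX j k * (binit ω k - β0 k)| ≤ Δ j}) :
    IsGaussianVec μ
      (fun ω j => ridge n X lam (X.mulVec β0 + ε ω) j - ∫ ω', ridge n X lam (X.mulVec β0 + ε ω') j ∂μ)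
      0 ((σ ^ 2 * (n : ℝ)⁻¹) • OmegaM n X lam) ∧
    1 - ENNReal.ofReal κ ≤
      μ {ω | ∀ G : Finset (Fin p), ∀ hG : G.Nonempty, (∀ j ∈ G, β0 j = 0) →
        (G.sup' hG fun j =>
            anp n X lam σ j * |corrRidge n X lam PX (X.mulVec β0 + ε ω) (binit ω) j|) ≤
          (G.sup' hG fun j => anp n X lam σ j * |ridge n X lam (X.mulVec β0 + ε ω) j - ∫ ω', ridge n X lam (X.mulVec β0 + ε ω') j ∂μ| + Δ j) +
            (⨆ j' : Fin p, anp n X lam σ j' * |(∫ ω', ridge n X lam (X.mulVec β0 + ε ω') j' ∂μ) - PX.mulVec β0 j'|)} := by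
  classical
  set A : Matrix (Fin p) (Fin p) ℝ := Sigmahat n X + lam • 1 with hA
  set M : Matrix (Fin p) (Fin n) ℝ := A⁻¹ * (((n:ℝ))⁻¹ • Xᵀ) with hM
  have hridge : ∀ Y, ridge n X lam Y = M.mulVec Y := fun Y => rfl
  -- coordinate laws of ε
  have hεlaw : ∀ i, Measure.map (fun ω => ε ω i) μ
      = gaussianReal 0 (Real.toNNReal (σ^2)) := by
    intro i
    have h := hε (Pi.single i 1)
    simp only [Pi.single_apply, ite_mul, one_mul, zero_mul, Finset.sum_ite_eq,
      Finset.mem_univ, if_true, Pi.zero_apply, mul_zero, Finset.sum_const_zero,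
      Matrix.smul_apply, Matrix.one_apply, smul_eq_mul, mul_ite, mul_one, mul_zero] at h
    convert h using 2
    · funext ω
      simp
    · congr 1
      rw [Finset.sum_comm]
      simp [Finset.sum_ite_eq]
  have hεint : ∀ i, Integrable (fun ω => ε ω i) μ := by
    intro i
    have h := integrable_id_gaussianReal 0 (Real.toNNReal (σ^2))
    rw [← hεlaw i] at h
    exact (integrable_map_measure measurable_id.aestronglyMeasurable
      (hεm i).aemeasurable).mp h
  have hεmean : ∀ i, ∫ ω, ε ω i ∂μ = 0 := by
    intro i
    have h := integral_map (φ := fun ω => ε ω i) (f := fun x : ℝ => x) (μ := μ)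
      (hεm i).aemeasurable measurable_id.aestronglyMeasurable
    rw [hεlaw i] at h
    simpa [integral_id_gaussianReal_zero] using h.symm
  -- mean of the ridge estimator
  have hrewr : ∀ ω j, ridge n X lam (X.mulVec β0 + ε ω) j
      = M.mulVec (X.mulVec β0) j + ∑ i, M j i * ε ω i := by
    intro ω j
    rw [hridge, Matrix.mulVec_add]
    rfl
  have hmean : ∀ j, (∫ ω', ridge n X lam (X.mulVec β0 + ε ω') j ∂μ)
      = M.mulVec (X.mulVec β0) j := by
    intro j
    simp_rw [hrewr]
    rw [integral_add (integrable_const _)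
      (integrable_finset_sum _ fun i _ => (hεint i).const_mul (M j i)),
      integral_finset_sum _ (fun i _ => (hεint i).const_mul (M j i))]
    simp only [integral_const, measure_univ, ENNReal.toReal_one, smul_eq_mul, one_mul]
    simp [integral_const_mul, hεmean]
  have hZ : ∀ ω j, ridge n X lam (X.mulVec β0 + ε ω) j
      - (∫ ω', ridge n X lam (X.mulVec β0 + ε ω') j ∂μ) = M.mulVec (ε ω) j := by
    intro ω j
    rw [hmean, hrewr]
    simp [Matrix.mulVec, dotProduct]
  constructor
  · -- Gaussianity
    intro u
    set v : Fin n → ℝ := Matrix.vecMul u M with hv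
    have hfun : (fun ω => ∑ j, u j * (ridge n X lam (X.mulVec β0 + ε ω) j
        - ∫ ω', ridge n X lam (X.mulVec β0 + ε ω') j ∂μ)) = fun ω => ∑ i, v i * ε ω i := by
      funext ω
      simp_rw [hZ]
      exact Matrix.dotProduct_mulVec u M (ε ω)
    rw [hfun, hε v]
    have hAT : Aᵀ = A := by
      rw [hA]
      simp [Matrix.transpose_add, Matrix.transpose_smul, Sigmahat,
        Matrix.transpose_mul, Matrix.transpose_transpose]
    have hMMT : M * Mᵀ = ((n:ℝ))⁻¹ • OmegaM n X lam := by
      have hOm : OmegaM n X lam = A⁻¹ * Sigmahat n X * A⁻¹ := by rw [OmegaM, ← hA]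
      rw [hM, Matrix.transpose_mul, Matrix.transpose_smul, Matrix.transpose_transpose,
        Matrix.transpose_nonsing_inv, hAT, hOm, Sigmahat]
      simp only [Matrix.smul_mul, Matrix.mul_smul, smul_smul, Matrix.mul_assoc]
    have hvar : (∑ i, ∑ k, v i * (σ ^ 2 • (1 : Matrix (Fin n) (Fin n) ℝ)) i k * v k)
        = ∑ j, ∑ k, u j * ((σ ^ 2 * (n : ℝ)⁻¹) • OmegaM n X lam) j k * u k := by
      have l1 : (∑ i, ∑ k, v i * (σ ^ 2 • (1 : Matrix (Fin n) (Fin n) ℝ)) i k * v k)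
          = σ ^ 2 * (v ⬝ᵥ v) := by
        simp only [Matrix.smul_apply, Matrix.one_apply, smul_eq_mul, mul_ite, mul_one,
          mul_zero, ite_mul, zero_mul, Finset.sum_ite_eq, Finset.mem_univ, if_true]
        rw [dotProduct, Finset.mul_sum]
        exact Finset.sum_congr rfl fun i _ => by ring
      have l2 : v ⬝ᵥ v = u ⬝ᵥ (M * Mᵀ).mulVec u := by
        rw [hv, ← Matrix.mulVec_mulVec, Matrix.mulVec_transpose,
          ← Matrix.dotProduct_mulVec]
      have l3 : (∑ j, ∑ k, u j * ((σ ^ 2 * (n : ℝ)⁻¹) • OmegaM n X lam) j k * u k)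
          = (σ ^ 2 * (n : ℝ)⁻¹) * (u ⬝ᵥ (OmegaM n X lam).mulVec u) := by
        simp only [Matrix.mulVec, dotProduct, Matrix.smul_apply, smul_eq_mul,
          Finset.mul_sum]
        exact Finset.sum_congr rfl fun j _ => Finset.sum_congr rfl fun k _ => by ring
      rw [l1, l2, l3, hMMT, Matrix.smul_mulVec, dotProduct_smul]
      simp only [smul_eq_mul]
      ring
    rw [hvar]
    congr 1
    simp
  · -- probability bound
    refine le_trans hA' (μ.mono ?_)
    intro ω hω
    simp only [Set.mem_setOf_eq] at hω ⊢
    intro G hG h0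
    have hanonneg : ∀ j, 0 ≤ anp n X lam σ j := by
      intro j
      unfold anp
      positivity
    set mm : Fin p → ℝ := fun j => ∫ ω', ridge n X lam (X.mulVec β0 + ε ω') j ∂μ with hmm
    refine Finset.sup'_le _ _ fun j hj => ?_
    have hβj : β0 j = 0 := h0 j hj
    have hPXj : PX.mulVec β0 j = ∑ k ∈ Finset.univ.erase j, PX j k * β0 k := by
      rw [Matrix.mulVec, dotProduct,
        ← Finset.add_sum_erase _ _ (Finset.mem_univ j), hβj, mul_zero, zero_add]
    have key : corrRidge n X lam PX (X.mulVec β0 + ε ω) (binit ω) j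
        = (ridge n X lam (X.mulVec β0 + ε ω) j - mm j) + (mm j - PX.mulVec β0 j)
          - ∑ k ∈ Finset.univ.erase j, PX j k * (binit ω k - β0 k) := by
      unfold corrRidge
      rw [hPXj]
      simp only [mul_sub, Finset.sum_sub_distrib]
      ring
    have habs : |corrRidge n X lam PX (X.mulVec β0 + ε ω) (binit ω) j|
        ≤ |ridge n X lam (X.mulVec β0 + ε ω) j - mm j| + |mm j - PX.mulVec β0 j|
          + |∑ k ∈ Finset.univ.erase j, PX j k * (binit ω k - β0 k)| := by
      rw [key]
      exact (abs_sub _ _).trans (by gcongr; exact abs_add_le _ _)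
    have hS : anp n X lam σ j * |∑ k ∈ Finset.univ.erase j, PX j k * (binit ω k - β0 k)|
        ≤ Δ j := by
      have := hω j
      rwa [abs_mul, abs_of_nonneg (hanonneg j)] at this
    have hb : anp n X lam σ j * |mm j - PX.mulVec β0 j|
        ≤ ⨆ j' : Fin p, anp n X lam σ j' * |mm j' - PX.mulVec β0 j'| :=
      le_ciSup (f := fun j' => anp n X lam σ j' * |mm j' - PX.mulVec β0 j'|)
        (Set.Finite.bddAbove (Set.finite_range _)) j
    have hsup : anp n X lam σ j * |ridge n X lam (X.mulVec β0 + ε ω) j - mm j| + Δ j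
        ≤ G.sup' hG fun j => anp n X lam σ j
          * |ridge n X lam (X.mulVec β0 + ε ω) j - mm j| + Δ j :=
      Finset.le_sup' (f := fun j => anp n X lam σ j
        * |ridge n X lam (X.mulVec β0 + ε ω) j - mm j| + Δ j) hj
    have hmul := mul_le_mul_of_nonneg_left habs (hanonneg j)
    rw [mul_add, mul_add] at hmul
    calc anp n X lam σ j * |corrRidge n X lam PX (X.mulVec β0 + ε ω) (binit ω) j|
        ≤ anp n X lam σ j * |ridge n X lam (X.mulVec β0 + ε ω) j - mm j|
          + anp n X lam σ j * |mm j - PX.mulVec β0 j|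
          + anp n X lam σ j
            * |∑ k ∈ Finset.univ.erase j, PX j k * (binit ω k - β0 k)| := hmul
      _ ≤ (anp n X lam σ j * |ridge n X lam (X.mulVec β0 + ε ω) j - mm j| + Δ j)
          + (⨆ j' : Fin p, anp n X lam σ j' * |mm j' - PX.mulVec β0 j'|) := by
          linarith
      _ ≤ _ := add_le_add_left hsup _

end PaperRidge
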